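/- (Proposition 1.) Under Assumption 1 with parameter k, for all integers t, t' with t − t' ≥ k + 1, if cov(w_{t−1}, w_{t'}) ≠ 0, then the instrumental-variable estimand identifies the growth rate of the return to skill: cov(w_t − w_{t−1}, w_{t'}) / cov(w_{t−1}, w_{t'}) = (μ_t − μ_{t−1}) / μ_{t−1}; in particular μ_{t−1} ≠ 0. -/

import Mathlib

open MeasureTheory ProbabilityTheory

/-- Covariance of two real-valued random variables under measure `P`. -/
noncomputable def cov {Ω : Type*} [MeasurableSpace Ω] (P : Measure Ω) (X Y : Ω → ℝ) : ℝ :=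
  ∫ ω, (X ω - ∫ a, X a ∂P) * (Y ω - ∫ a, Y a ∂P) ∂P

/-- Variance of a real-valued random variable under measure `P`. -/
noncomputable def Var {Ω : Type*} [MeasurableSpace Ω] (P : Measure Ω) (X : Ω → ℝ) : ℝ :=
  cov P X X

section CovLemmas

variable {Ω : Type*} [MeasurableSpace Ω] (P : Measure Ω) [IsProbabilityMeasure P]

private lemma cov_mul_integrable {X Y : Ω → ℝ} (hX : MemLp X 2 P) (hY : MemLp Y 2 P) :
    Integrable (fun ω => X ω * Y ω) P :=
  haveI : ENNReal.HolderTriple 2 2 1 := ⟨by norm_num [ENNReal.inv_two_add_inv_two]⟩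
  memLp_one_iff_integrable.mp (hY.smul (r := 1) hX)

private lemma cov_comm' (X Y : Ω → ℝ) : cov P X Y = cov P Y X :=
  integral_congr_ae (ae_of_all _ fun ω => mul_comm _ _)

private lemma cov_smul_left (c : ℝ) (X Z : Ω → ℝ) :
    cov P (fun ω => c * X ω) Z = c * cov P X Z := by
  unfold cov
  calc ∫ ω, (c * X ω - ∫ a, c * X a ∂P) * (Z ω - ∫ a, Z a ∂P) ∂P
      = ∫ ω, c * ((X ω - ∫ a, X a ∂P) * (Z ω - ∫ a, Z a ∂P)) ∂P := by
        apply integral_congr_ae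
        filter_upwards with ω
        rw [integral_const_mul]; ring
    _ = c * ∫ ω, (X ω - ∫ a, X a ∂P) * (Z ω - ∫ a, Z a ∂P) ∂P := integral_const_mul _ _

private lemma cov_add_left {X Y Z : Ω → ℝ} (hX : MemLp X 2 P) (hY : MemLp Y 2 P)
    (hZ : MemLp Z 2 P) :
    cov P (fun ω => X ω + Y ω) Z = cov P X Z + cov P Y Z := by
  unfold cov
  have hXc : MemLp (fun ω => X ω - ∫ a, X a ∂P) 2 P := hX.sub (memLp_const _)
  have hYc : MemLp (fun ω => Y ω - ∫ a, Y a ∂P) 2 P := hY.sub (memLp_const _)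
  have hZc : MemLp (fun ω => Z ω - ∫ a, Z a ∂P) 2 P := hZ.sub (memLp_const _)
  calc ∫ ω, ((X ω + Y ω) - ∫ a, (X a + Y a) ∂P) * (Z ω - ∫ a, Z a ∂P) ∂P
      = ∫ ω, ((X ω - ∫ a, X a ∂P) * (Z ω - ∫ a, Z a ∂P)
          + (Y ω - ∫ a, Y a ∂P) * (Z ω - ∫ a, Z a ∂P)) ∂P := by
        apply integral_congr_ae
        filter_upwards with ω
        rw [integral_add (hX.integrable one_le_two) (hY.integrable one_le_two)]; ring
    _ = _ := integral_add (cov_mul_integrable P hXc hZc) (cov_mul_integrable P hYc hZc)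

private lemma cov_sub_left {X Y Z : Ω → ℝ} (hX : MemLp X 2 P) (hY : MemLp Y 2 P)
    (hZ : MemLp Z 2 P) :
    cov P (fun ω => X ω - Y ω) Z = cov P X Z - cov P Y Z := by
  have h : (fun ω => X ω - Y ω) = fun ω => X ω + (-1) * Y ω := by funext ω; ring
  rw [h, cov_add_left P hX (hY.const_mul (-1)) hZ, cov_smul_left]; ring

end CovLemmas

/-- Proposition 1: under Assumption 1 with parameter `k`, for `t - t' ≥ k + 1` the IV
estimand identifies the growth rate of the return to skill. -/
theorem IV_identifies_return_growth
    {Ω : Type*} [MeasurableSpace Ω] (P : Measure Ω) [IsProbabilityMeasure P]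
    (θ ε : ℤ → Ω → ℝ) (μ : ℤ → ℝ) (w : ℤ → Ω → ℝ)
    (hθ : ∀ t, MemLp (θ t) 2 P) (hε : ∀ t, MemLp (ε t) 2 P)
    (hw : ∀ t ω, w t ω = μ t * θ t ω + ε t ω)
    (k : ℕ) (hk : 1 ≤ k)
    (A1i : ∀ t t' : ℤ, (k : ℤ) ≤ t - t' →
      cov P (fun ω => θ t ω - θ (t - 1) ω) (θ t') = 0)
    (A1ii : ∀ t t' : ℤ, (k : ℤ) ≤ t - t' →
      cov P (fun ω => θ t ω - θ (t - 1) ω) (ε t') = 0)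
    (A1iii : ∀ t t' : ℤ, (k : ℤ) ≤ t - t' → cov P (ε t) (θ t') = 0)
    (A1iv : ∀ t t' : ℤ, (k : ℤ) ≤ t - t' → cov P (ε t) (ε t') = 0) :
    ∀ t t' : ℤ, (k : ℤ) + 1 ≤ t - t' →
      cov P (w (t - 1)) (w t') ≠ 0 →
      μ (t - 1) ≠ 0 ∧
        cov P (fun ω => w t ω - w (t - 1) ω) (w t') / cov P (w (t - 1)) (w t') =
          (μ t - μ (t - 1)) / μ (t - 1) := by
  intro t t' ht hne
  have hk1 : (k : ℤ) ≤ t - t' := by linarith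
  have hk2 : (k : ℤ) ≤ (t - 1) - t' := by linarith
  have hwfun : ∀ s : ℤ, w s = fun ω => μ s * θ s ω + ε s ω := fun s => funext (hw s)
  have hwL2 : ∀ s : ℤ, MemLp (w s) 2 P := fun s => by
    rw [hwfun s]; exact ((hθ s).const_mul _).add (hε s)
  have expand : ∀ (X : Ω → ℝ), MemLp X 2 P →
      cov P X (w t') = μ t' * cov P X (θ t') + cov P X (ε t') := by
    intro X hX
    rw [cov_comm' P X, hwfun t',
      cov_add_left (X := fun ω => μ t' * θ t' ω) (Y := ε t') P
        (by exact (hθ t').const_mul _) (hε t') hX,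
      cov_smul_left, cov_comm' P (θ t') X, cov_comm' P (ε t') X]
  have E1 : cov P (fun ω => θ t ω - θ (t - 1) ω) (w t') = 0 := by
    rw [expand _ (by exact (hθ t).sub (hθ (t - 1))), A1i t t' hk1, A1ii t t' hk1]; ring
  have E2 : cov P (ε t) (w t') = 0 := by
    rw [expand _ (hε t), A1iii t t' hk1, A1iv t t' hk1]; ring
  have E3 : cov P (ε (t - 1)) (w t') = 0 := by
    rw [expand _ (hε (t - 1)), A1iii _ _ hk2, A1iv _ _ hk2]; ring
  set C := cov P (θ (t - 1)) (w t') with hCdef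
  have hden : cov P (w (t - 1)) (w t') = μ (t - 1) * C := by
    rw [hwfun (t - 1),
      cov_add_left (X := fun ω => μ (t - 1) * θ (t - 1) ω) (Y := ε (t - 1)) P
        (by exact (hθ (t - 1)).const_mul _) (hε (t - 1)) (hwL2 t'),
      cov_smul_left, E3, add_zero]
  have hnum : cov P (fun ω => w t ω - w (t - 1) ω) (w t') = (μ t - μ (t - 1)) * C := by
    have hfun : (fun ω => w t ω - w (t - 1) ω)
        = fun ω => μ t * (θ t ω - θ (t - 1) ω)
          + ((μ t - μ (t - 1)) * θ (t - 1) ω + (ε t ω - ε (t - 1) ω)) := by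
      funext ω; rw [hw, hw]; ring
    rw [hfun,
      cov_add_left (X := fun ω => μ t * (θ t ω - θ (t - 1) ω))
        (Y := fun ω => (μ t - μ (t - 1)) * θ (t - 1) ω + (ε t ω - ε (t - 1) ω)) P
        (by exact ((hθ t).sub (hθ (t - 1))).const_mul _)
        (by exact (((hθ (t - 1)).const_mul _).add ((hε t).sub (hε (t - 1))))) (hwL2 t'),
      cov_smul_left, E1,
      cov_add_left (X := fun ω => (μ t - μ (t - 1)) * θ (t - 1) ω)
        (Y := fun ω => ε t ω - ε (t - 1) ω) P
        (by exact (hθ (t - 1)).const_mul _)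
        (by exact (hε t).sub (hε (t - 1))) (hwL2 t'),
      cov_smul_left,
      cov_sub_left P (hε t) (hε (t - 1)) (hwL2 t'), E2, E3]
    ring
  rw [hden] at hne
  have hμ : μ (t - 1) ≠ 0 := fun h => hne (by rw [h, zero_mul])
  have hCne : C ≠ 0 := fun h => hne (by rw [h, mul_zero])
  refine ⟨hμ, ?_⟩
  rw [hnum, hden]
  field_simp
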